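/- Let σ : ℝ → ℝ be a twice continuously differentiable even function with σ(ξ) → 0 as ξ → ±∞, satisfying σ''(ξ) − σ(ξ) + (6/cosh²ξ)·σ(ξ) = 0 for all ξ ∈ ℝ. Then σ is identically zero. (Equivalently: 0 is not an eigenvalue of the operator L on even decaying functions, so L is injective there.) -/

import Mathlib

open Real Filter Set

noncomputable def LKu1 (x : ℝ) : ℝ := Real.sinh x / Real.cosh x ^ 2
noncomputable def LKv1 (x : ℝ) : ℝ := 2 / Real.cosh x ^ 3 - 1 / Real.cosh x

lemma LKu1_deriv (x : ℝ) : HasDerivAt LKu1 (LKv1 x) x := by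
  have hc : Real.cosh x ≠ 0 := (Real.cosh_pos x).ne'
  have h := (Real.hasDerivAt_sinh x).div ((Real.hasDerivAt_cosh x).pow 2) (pow_ne_zero 2 hc)
  refine h.congr_deriv ?_ |>.congr_of_eventuallyEq (Eventually.of_forall fun _ => rfl); symm; simp only [Pi.pow_apply, LKv1]
  have hs : Real.sinh x ^ 2 = Real.cosh x ^ 2 - 1 := Real.sinh_sq x
  field_simp [LKv1]
  linear_combination (2*Real.cosh x) * hs

lemma LKv1_deriv (x : ℝ) : HasDerivAt LKv1 ((1 - 6 / Real.cosh x ^ 2) * LKu1 x) x := by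
  have hc : Real.cosh x ≠ 0 := (Real.cosh_pos x).ne'
  have h1 := (HasDerivAt.div (hasDerivAt_const x (2:ℝ)) ((Real.hasDerivAt_cosh x).pow 3) (pow_ne_zero 3 hc))
  have h2 := (HasDerivAt.div (hasDerivAt_const x (1:ℝ)) (Real.hasDerivAt_cosh x) hc)
  have h := h1.sub h2
  refine h.congr_deriv ?_ |>.congr_of_eventuallyEq (Eventually.of_forall fun _ => rfl); symm; simp only [Pi.pow_apply]
  unfold LKu1
  field_simp
  ring

lemma LK_coshinv_tendsto : Tendsto (fun x => (Real.cosh x)⁻¹) atTop (nhds 0) := by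
  apply squeeze_zero_norm (a := fun x => 2 * Real.exp (-x))
  · intro x
    have h0 : (0:ℝ) < Real.cosh x := Real.cosh_pos x
    have h1 : Real.exp x / 2 ≤ Real.cosh x := by
      rw [Real.cosh_eq]; have := (Real.exp_pos (-x)).le; linarith
    have h2 : (Real.cosh x)⁻¹ ≤ (Real.exp x / 2)⁻¹ := by
      apply inv_anti₀ (by positivity) h1
    rw [Real.norm_eq_abs, abs_of_pos (by positivity)]
    calc (Real.cosh x)⁻¹ ≤ (Real.exp x / 2)⁻¹ := h2
      _ = 2 * Real.exp (-x) := by rw [Real.exp_neg]; field_simp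
  · simpa using (tendsto_exp_neg_atTop_nhds_zero.const_mul 2)

lemma LK_abs_sinh_le (x : ℝ) : |Real.sinh x| ≤ Real.cosh x := by
  rw [abs_le]
  constructor
  · have := Real.sinh_lt_cosh (x := -x)
    rw [Real.sinh_neg, Real.cosh_neg] at this
    linarith
  · exact (Real.sinh_lt_cosh (x := x)).le

lemma LKu1_tendsto : Tendsto LKu1 atTop (nhds 0) := by
  apply squeeze_zero_norm (a := fun x => (Real.cosh x)⁻¹) _ LK_coshinv_tendsto
  intro x
  have h0 : (0:ℝ) < Real.cosh x := Real.cosh_pos x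
  have h2 : (0:ℝ) < Real.cosh x ^ 2 := by positivity
  calc ‖LKu1 x‖ = |Real.sinh x| / Real.cosh x ^ 2 := by
        rw [Real.norm_eq_abs, LKu1, abs_div, abs_of_pos h2]
    _ ≤ Real.cosh x / Real.cosh x ^ 2 := by gcongr; exact LK_abs_sinh_le x
    _ = (Real.cosh x)⁻¹ := by field_simp [sq]

lemma LKv1_tendsto : Tendsto LKv1 atTop (nhds 0) := by
  apply squeeze_zero_norm (a := fun x => 3 * (Real.cosh x)⁻¹)
  · intro x
    have h0 : (0:ℝ) < Real.cosh x := Real.cosh_pos x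
    have h1 : (1:ℝ) ≤ Real.cosh x := Real.one_le_cosh x
    have hc3 : Real.cosh x ≤ Real.cosh x ^ 3 := by nlinarith [sq_nonneg (Real.cosh x - 1), sq_nonneg (Real.cosh x + 1)]
    have p2 : 2 / Real.cosh x ^ 3 ≤ 2 / Real.cosh x := by gcongr
    have p3 : (0:ℝ) ≤ 2 / Real.cosh x ^ 3 := by positivity
    have p4 : (0:ℝ) < 1 / Real.cosh x := by positivity
    have hinv : 3 * (Real.cosh x)⁻¹ = 3 / Real.cosh x := by rw [inv_eq_one_div]; ring
    rw [Real.norm_eq_abs, LKv1, hinv, abs_le]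
    constructor
    · have : 1 / Real.cosh x ≤ 3 / Real.cosh x := by gcongr <;> norm_num
      linarith
    · have : 2 / Real.cosh x + 1 / Real.cosh x = 3 / Real.cosh x := by ring
      linarith
  · simpa using LK_coshinv_tendsto.const_mul 3

/-- If `σ : ℝ → ℝ` is a `C²` even function tending to `0` at `±∞` and
satisfying `σ'' − σ + (6/cosh²ξ)·σ = 0` on `ℝ`, then `σ ≡ 0`; i.e. `0` is not an eigenvalue
of the operator `L` on even decaying functions. -/
theorem L_injective_on_even_decaying (σ : ℝ → ℝ)
    (hreg : ContDiff ℝ 2 σ)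
    (heven : ∀ ξ, σ (-ξ) = σ ξ)
    (htop : Filter.Tendsto σ Filter.atTop (nhds 0))
    (hbot : Filter.Tendsto σ Filter.atBot (nhds 0))
    (hker : ∀ ξ, deriv (deriv σ) ξ - σ ξ + 6 / Real.cosh ξ ^ 2 * σ ξ = 0) :
    ∀ ξ, σ ξ = 0 := by
  -- regularity facts
  have hd : Differentiable ℝ σ := hreg.differentiable (by norm_num)
  have h2 : ContDiff ℝ 1 (deriv σ) := by
    have := (contDiff_succ_iff_deriv (n := 1)).mp (by exact_mod_cast hreg)
    exact this.2.2
  have hd' : Differentiable ℝ (deriv σ) := h2.differentiable one_ne_zero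
  have hdd : ∀ t, HasDerivAt (deriv σ) (deriv (deriv σ) t) t := fun t => (hd' t).hasDerivAt
  have hσ'' : ∀ t, deriv (deriv σ) t = (1 - 6 / Real.cosh t ^ 2) * σ t := fun t => by
    linear_combination hker t
  have hcoef : ∀ t : ℝ, |1 - 6 / Real.cosh t ^ 2| ≤ 7 := by
    intro t
    have h1 : (1:ℝ) ≤ Real.cosh t := Real.one_le_cosh t
    have hc2 : (1:ℝ) ≤ Real.cosh t ^ 2 := by nlinarith
    have ha : (0:ℝ) < 6 / Real.cosh t ^ 2 := by positivity
    have hb : 6 / Real.cosh t ^ 2 ≤ 6 := by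
      rw [div_le_iff₀ (by positivity)]; nlinarith
    rw [abs_le]; constructor <;> linarith
  -- derivative of σ tends to 0 at +∞
  have hderivtop : Tendsto (deriv σ) atTop (nhds 0) := by
    rw [Metric.tendsto_atTop]
    intro ε hε
    obtain ⟨N, hN⟩ := Metric.tendsto_atTop.mp htop (ε/10) (by positivity)
    refine ⟨N, fun x hx => ?_⟩
    have hcont : Continuous (deriv (deriv σ)) := by
      rw [show deriv (deriv σ) = fun t => (1 - 6 / Real.cosh t ^ 2) * σ t from funext hσ'']
      exact (continuous_const.sub (continuous_const.div
        (Real.continuous_cosh.pow 2) (fun t => pow_ne_zero 2 (Real.cosh_pos t).ne'))).mul hd.continuous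
    have hcont2 : Continuous (fun t => (x + 1 - t) * deriv (deriv σ) t) :=
      (continuous_const.sub continuous_id).mul hcont
    set G : ℝ → ℝ := fun t => σ t + (x + 1 - t) * deriv σ t with hGdef
    have hInt : (∫ t in x..(x+1), (x + 1 - t) * deriv (deriv σ) t) = G (x+1) - G x := by
      apply intervalIntegral.integral_eq_sub_of_hasDerivAt
      · intro t _
        have h1 : HasDerivAt (fun s : ℝ => x + 1 - s) (-1) t := by
          simpa using (hasDerivAt_id t).const_sub (x + 1)
        have h := ((hd t).hasDerivAt).add (h1.mul (hdd t))
        refine h.congr_deriv ?_ |>.congr_of_eventuallyEq (Eventually.of_forall fun _ => rfl); ring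
      · exact hcont2.intervalIntegrable _ _
    have hIb : |∫ t in x..(x+1), (x + 1 - t) * deriv (deriv σ) t| ≤ (7 * (ε/10)) * |x + 1 - x| := by
      rw [← Real.norm_eq_abs]
      apply intervalIntegral.norm_integral_le_of_norm_le_const
      intro t ht
      rw [Set.uIoc_of_le (by linarith)] at ht
      have hσt : |σ t| < ε/10 := by
        have := hN t (by linarith [ht.1.le])
        simpa [Real.dist_eq] using this
      have h7 : |deriv (deriv σ) t| ≤ 7 * |σ t| := by
        rw [hσ'' t, abs_mul]
        have := hcoef t
        nlinarith [abs_nonneg (σ t)]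
      have h1 : |x + 1 - t| ≤ 1 := by
        rw [abs_le]; exact ⟨by linarith [ht.2], by linarith [ht.1]⟩
      calc ‖(x + 1 - t) * deriv (deriv σ) t‖ = |x + 1 - t| * |deriv (deriv σ) t| := abs_mul _ _
        _ ≤ 1 * (7 * (ε/10)) := by
            apply mul_le_mul h1 (by nlinarith) (abs_nonneg _) (by norm_num)
        _ = 7 * (ε/10) := by ring
    have hEq : deriv σ x = σ (x+1) - σ x - ∫ t in x..(x+1), (x + 1 - t) * deriv (deriv σ) t := by
      rw [hInt, hGdef]; simp
    have hx1 : |σ (x+1)| < ε/10 := by simpa [Real.dist_eq] using hN (x+1) (by linarith)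
    have hx0 : |σ x| < ε/10 := by simpa [Real.dist_eq] using hN x hx
    rw [Real.dist_eq, sub_zero, hEq]
    have htri : |σ (x+1) - σ x - ∫ t in x..(x+1), (x + 1 - t) * deriv (deriv σ) t|
        ≤ |σ (x+1)| + |σ x| + |∫ t in x..(x+1), (x + 1 - t) * deriv (deriv σ) t| := by
      have hA := abs_sub (σ (x+1) - σ x) (∫ t in x..(x+1), (x + 1 - t) * deriv (deriv σ) t)
      have hB := abs_sub (σ (x+1)) (σ x)
      linarith
    have : |x + 1 - x| = 1 := by norm_num
    rw [this] at hIb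
    linarith
  -- Wronskian
  set W : ℝ → ℝ := fun t => σ t * LKv1 t - deriv σ t * LKu1 t with hWdef
  have hW : ∀ t, HasDerivAt W 0 t := by
    intro t
    have h := ((hd t).hasDerivAt.mul (LKv1_deriv t)).sub ((hdd t).mul (LKu1_deriv t))
    refine h.congr_deriv ?_ |>.congr_of_eventuallyEq (Eventually.of_forall fun _ => rfl)
    rw [hσ'' t]; ring
  have hWconst : ∀ t, W t = W 0 := fun t =>
    is_const_of_deriv_eq_zero (fun x => (hW x).differentiableAt) (fun x => (hW x).deriv) t 0
  have hWtop : Tendsto W atTop (nhds 0) := by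
    simpa using (htop.mul LKv1_tendsto).sub (hderivtop.mul LKu1_tendsto)
  have hW0 : W 0 = 0 := by
    have h1 : Tendsto W atTop (nhds (W 0)) := by
      rw [show W = fun _ => W 0 from funext hWconst]; exact tendsto_const_nhds
    exact tendsto_nhds_unique h1 hWtop
  have hσ0 : σ 0 = 0 := by
    have hval : W 0 = σ 0 := by
      simp [hWdef, LKu1, LKv1, Real.sinh_zero, Real.cosh_zero]
      ring
    linarith [hW0, hval]
  -- σ'(0) = 0 from evenness
  have hder0 : deriv σ 0 = 0 := by
    have h1 : HasDerivAt (fun x : ℝ => σ (-x)) (deriv σ (-0) * (-1)) 0 :=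
      HasDerivAt.comp 0 ((hd (-0)).hasDerivAt) (hasDerivAt_neg 0)
    rw [show (fun x : ℝ => σ (-x)) = σ from funext heven] at h1
    have h3 := h1.unique (hd 0).hasDerivAt
    rw [neg_zero] at h3
    linarith
  -- ODE uniqueness
  intro ξ
  set b : ℝ := |ξ| + 1 with hb
  set F : ℝ → ℝ × ℝ := fun t => (σ t, deriv σ t) with hF
  set V : ℝ → ℝ × ℝ → ℝ × ℝ := fun t p => (p.2, (1 - 6 / Real.cosh t ^ 2) * p.1) with hV
  have hlip : ∀ t, LipschitzOnWith 7 (V t) Set.univ := by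
    intro t
    apply LipschitzWith.lipschitzOnWith
    apply LipschitzWith.of_dist_le_mul
    intro p q
    rw [Prod.dist_eq, Prod.dist_eq]
    simp only [hV, Real.dist_eq]
    have hco : ((7 : NNReal) : ℝ) = 7 := by norm_num
    rw [hco]
    have hmax1 : |p.1 - q.1| ≤ max |p.1 - q.1| |p.2 - q.2| := le_max_left _ _
    have hmax2 : |p.2 - q.2| ≤ max |p.1 - q.1| |p.2 - q.2| := le_max_right _ _
    have hnn : (0:ℝ) ≤ max |p.1 - q.1| |p.2 - q.2| := le_trans (abs_nonneg _) hmax1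
    apply max_le
    · linarith
    · have heq : (1 - 6 / Real.cosh t ^ 2) * p.1 - (1 - 6 / Real.cosh t ^ 2) * q.1
          = (1 - 6 / Real.cosh t ^ 2) * (p.1 - q.1) := by ring
      rw [heq, abs_mul]
      have := hcoef t
      nlinarith [abs_nonneg (p.1 - q.1)]
  have hFD : ∀ t, HasDerivAt F (V t (F t)) t := by
    intro t
    have h := ((hd t).hasDerivAt).prodMk (hdd t)
    simpa [hF, hV, hσ'' t] using h
  have hFcont : ContinuousOn F (Set.Icc (-b) b) :=
    ((hd.continuous).prodMk h2.continuous).continuousOn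
  have h0mem : (0:ℝ) ∈ Set.Ioo (-b) b := by
    constructor <;> · simp [hb]; linarith [abs_nonneg ξ]
  have hGD : ∀ t ∈ Set.Ioo (-b) b, HasDerivAt (fun _ : ℝ => ((0:ℝ), (0:ℝ))) (V t ((0:ℝ), (0:ℝ))) t := by
    intro t _
    have hz : V t ((0:ℝ), (0:ℝ)) = 0 := by simp [hV]
    rw [hz]
    exact hasDerivAt_const t _
  have heqon := ODE_solution_unique_of_mem_Icc (v := V) (s := fun _ => Set.univ)
    (fun t _ => hlip t) h0mem hFcont (fun t _ => hFD t) (fun _ _ => trivial)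
    continuousOn_const hGD (fun _ _ => trivial)
    (by simp [hF, hσ0, hder0])
  have hξmem : ξ ∈ Set.Icc (-b) b := by
    constructor
    · simp [hb]; linarith [neg_abs_le ξ]
    · simp [hb]; linarith [le_abs_self ξ]
  have := heqon hξmem
  have := congrArg Prod.fst this
  simpa [hF] using this
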